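/- If every element of a sequence c ∈ ℂ^N satisfies |c_n| = 1 and c is a complementary sequence (member of some GCP with a companion of equal energy N), then the PAPR of the corresponding OFDM symbol satisfies sup_{|z|=1} |p_c(z)|²/N ≤ 2, and this bound states the peak instantaneous power never exceeds 2N while the mean power is N. -/

import Mathlib

noncomputable def pPoly (a : ℤ → ℂ) (N : ℕ) (z : ℂ) : ℂ :=
  ∑ n ∈ Finset.range N, a n * z ^ n

noncomputable def apac (a : ℤ → ℂ) (N : ℕ) (k : ℤ) : ℂ :=
  ∑ n ∈ Finset.range N, a (n + k) * (starRingEnd ℂ) (a n)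

open Finset in
lemma pPoly_mul_conj (a : ℤ → ℂ) (N : ℕ)
    (hsa : ∀ n : ℤ, n < 0 ∨ (N : ℤ) ≤ n → a n = 0)
    (z : ℂ) (hz : z ≠ 0) (hz1 : (starRingEnd ℂ) z = z⁻¹) :
    pPoly a N z * (starRingEnd ℂ) (pPoly a N z)
      = ∑ k ∈ Finset.Icc (1 - (N:ℤ)) ((N:ℤ) - 1), apac a N k * z ^ k := by
  have L : pPoly a N z * (starRingEnd ℂ) (pPoly a N z)
      = ∑ q ∈ range N ×ˢ range N,
          a q.1 * (starRingEnd ℂ) (a q.2) * z ^ ((q.1 : ℤ) - (q.2 : ℤ)) := by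
    rw [pPoly, map_sum, Finset.sum_mul_sum, ← Finset.sum_product']
    refine Finset.sum_congr rfl fun q _ => ?_
    rw [map_mul, map_pow, hz1, sub_eq_add_neg, zpow_add₀ hz, zpow_natCast,
      zpow_neg, zpow_natCast, ← inv_pow]
    ring
  rw [L]
  have R : ∑ k ∈ Finset.Icc (1 - (N:ℤ)) ((N:ℤ) - 1), apac a N k * z ^ k
      = ∑ p ∈ Finset.Icc (1 - (N:ℤ)) ((N:ℤ) - 1) ×ˢ range N,
          a (p.2 + p.1) * (starRingEnd ℂ) (a p.2) * z ^ p.1 := by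
    rw [Finset.sum_product]
    refine Finset.sum_congr rfl fun k _ => ?_
    rw [apac, Finset.sum_mul]
  rw [R]
  set S := Finset.Icc (1 - (N:ℤ)) ((N:ℤ) - 1) ×ˢ range N with hS
  have hfil : ∑ p ∈ S.filter (fun p => 0 ≤ (p.2 : ℤ) + p.1 ∧ (p.2 : ℤ) + p.1 < (N : ℤ)),
        a (p.2 + p.1) * (starRingEnd ℂ) (a p.2) * z ^ p.1
      = ∑ p ∈ S, a (p.2 + p.1) * (starRingEnd ℂ) (a p.2) * z ^ p.1 := by
    refine Finset.sum_filter_of_ne fun p hp hne => ?_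
    by_contra h
    push_neg at h
    have : a ((p.2 : ℤ) + p.1) = 0 := by
      rcases lt_or_ge ((p.2 : ℤ) + p.1) 0 with h' | h'
      · exact hsa _ (Or.inl h')
      · exact hsa _ (Or.inr (h h'))
    simp [this] at hne
  rw [← hfil]
  symm
  refine Finset.sum_nbij' (i := fun p => ((((p.2 : ℤ) + p.1).toNat, p.2) : ℕ × ℕ))
    (j := fun q => (((q.1 : ℤ) - (q.2 : ℤ), q.2) : ℤ × ℕ)) ?_ ?_ ?_ ?_ ?_
  · intro p hp
    simp only [Finset.mem_filter, hS, Finset.mem_product, Finset.mem_Icc, mem_range] at hp ⊢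
    constructor
    · omega
    · exact hp.1.2
  · intro q hq
    simp only [Finset.mem_filter, hS, Finset.mem_product, Finset.mem_Icc, mem_range] at hq ⊢
    omega
  · intro p hp
    simp only [Finset.mem_filter, hS, Finset.mem_product, Finset.mem_Icc, mem_range] at hp
    have : (((p.2 : ℤ) + p.1).toNat : ℤ) = (p.2 : ℤ) + p.1 := Int.toNat_of_nonneg hp.2.1
    ext <;> simp [this]
  · intro q hq
    simp only [Finset.mem_filter, hS, Finset.mem_product, Finset.mem_Icc, mem_range] at hq
    ext <;> simp
  · intro p hp
    simp only [Finset.mem_filter, hS, Finset.mem_product, Finset.mem_Icc, mem_range] at hp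
    have h1 : (((p.2 : ℤ) + p.1).toNat : ℤ) = (p.2 : ℤ) + p.1 := Int.toNat_of_nonneg hp.2.1
    simp only [h1]
    ring_nf

/-- A unimodular complementary sequence (member of a GCP with a companion of
energy `N`) has PAPR at most 2: peak power at most `2N` while mean power is `N`. -/
theorem stmt17 (N : ℕ) (hN : 0 < N) (c d : ℤ → ℂ)
    (hsc : ∀ n : ℤ, n < 0 ∨ (N : ℤ) ≤ n → c n = 0)
    (hsd : ∀ n : ℤ, n < 0 ∨ (N : ℤ) ≤ n → d n = 0)
    (hcu : ∀ n : ℤ, 0 ≤ n → n < (N : ℤ) → ‖c n‖ = 1)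
    (hdE : ∑ n ∈ Finset.range N, ‖d n‖ ^ 2 = N)
    (hGCP : ∀ k : ℤ, k ≠ 0 → apac c N k + apac d N k = 0) :
    ∀ z : ℂ, ‖z‖ = 1 →
      ‖pPoly c N z‖ ^ 2 / N ≤ 2 := by
  intro z hzabs
  have hz : z ≠ 0 := by
    intro h; rw [h] at hzabs; simp at hzabs
  have hz1 : (starRingEnd ℂ) z = z⁻¹ := by
    rw [Complex.inv_def, Complex.normSq_eq_norm_sq, hzabs]
    simp
  -- sum of the two autocorrelation polynomials
  have hsum : pPoly c N z * (starRingEnd ℂ) (pPoly c N z)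
      + pPoly d N z * (starRingEnd ℂ) (pPoly d N z)
      = ∑ k ∈ Finset.Icc (1 - (N:ℤ)) ((N:ℤ) - 1),
          (apac c N k + apac d N k) * z ^ k := by
    rw [pPoly_mul_conj c N hsc z hz hz1, pPoly_mul_conj d N hsd z hz hz1,
      ← Finset.sum_add_distrib]
    refine Finset.sum_congr rfl fun k _ => ?_
    ring
  have hzero : (0 : ℤ) ∈ Finset.Icc (1 - (N:ℤ)) ((N:ℤ) - 1) := by
    simp only [Finset.mem_Icc]; omega
  have hcollapse : ∑ k ∈ Finset.Icc (1 - (N:ℤ)) ((N:ℤ) - 1),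
      (apac c N k + apac d N k) * z ^ k = apac c N 0 + apac d N 0 := by
    rw [Finset.sum_eq_single_of_mem 0 hzero]
    · simp
    · intro k _ hk
      rw [hGCP k hk, zero_mul]
  have hc0 : apac c N 0 = (N : ℂ) := by
    rw [apac]
    have : ∀ n ∈ Finset.range N, c ((n : ℤ) + 0) * (starRingEnd ℂ) (c n) = 1 := by
      intro n hn
      rw [add_zero, Complex.mul_conj, Complex.normSq_eq_norm_sq,
        hcu n (by positivity) (by exact_mod_cast Finset.mem_range.mp hn)]
      norm_num
    rw [Finset.sum_congr rfl this]
    simp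
  have hd0 : apac d N 0 = (N : ℂ) := by
    rw [apac]
    have : ∀ n ∈ Finset.range N, d ((n : ℤ) + 0) * (starRingEnd ℂ) (d n)
        = ((‖d n‖ ^ 2 : ℝ) : ℂ) := by
      intro n hn
      rw [add_zero, Complex.mul_conj, Complex.normSq_eq_norm_sq]
    rw [Finset.sum_congr rfl this, ← Complex.ofReal_sum, hdE]
    simp
  have habs : ‖pPoly c N z‖ ^ 2 + ‖pPoly d N z‖ ^ 2
      = 2 * N := by
    have := hsum
    rw [hcollapse, hc0, hd0, Complex.mul_conj, Complex.mul_conj] at this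
    have h2 : ((Complex.normSq (pPoly c N z) + Complex.normSq (pPoly d N z) : ℝ) : ℂ)
        = ((2 * N : ℝ) : ℂ) := by
      push_cast
      rw [this]
      ring
    have h3 := Complex.ofReal_injective h2
    rw [Complex.sq_norm, Complex.sq_norm]
    linarith [h3]
  have hle : ‖pPoly c N z‖ ^ 2 ≤ 2 * N := by
    nlinarith [sq_nonneg (‖pPoly d N z‖)]
  rw [div_le_iff₀ (by exact_mod_cast hN : (0:ℝ) < N)]
  linarith
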